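/- Monotonicity of forgetting in the penalty strength: let Y be finite nonempty, π_ref strictly positive, β > 0, and n: Y → ℕ a count function that is not constant on Y. For λ ≥ 0, define π_λ(y) = π_ref(y)exp(−λ·n(y)/β)/Z_λ. Then the expected count E_{π_λ}[n] = Σ_y π_λ(y)·n(y) is strictly decreasing in λ. -/

import Mathlib

open Finset

private lemma expdiff_sign {a b β : ℝ} (hβ : 0 < β) (hab : a < b) (s t : ℝ) :
    (s - t) * (Real.exp (-(b*s)/β) * Real.exp (-(a*t)/β)
      - Real.exp (-(a*s)/β) * Real.exp (-(b*t)/β)) ≤ 0 ∧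
    (s ≠ t → (s - t) * (Real.exp (-(b*s)/β) * Real.exp (-(a*t)/β)
      - Real.exp (-(a*s)/β) * Real.exp (-(b*t)/β)) < 0) := by
  rw [← Real.exp_add, ← Real.exp_add]
  rcases lt_trichotomy s t with h | h | h
  · have hexp : Real.exp (-(a*s)/β + -(b*t)/β) < Real.exp (-(b*s)/β + -(a*t)/β) := by
      apply Real.exp_lt_exp.2
      rw [← add_div, ← add_div, div_lt_div_iff_of_pos_right hβ]
      nlinarith
    have hlt : (s - t) * (Real.exp (-(b*s)/β + -(a*t)/β)
        - Real.exp (-(a*s)/β + -(b*t)/β)) < 0 :=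
      mul_neg_of_neg_of_pos (by linarith) (by linarith)
    exact ⟨hlt.le, fun _ => hlt⟩
  · subst h; simp
  · have hexp : Real.exp (-(b*s)/β + -(a*t)/β) < Real.exp (-(a*s)/β + -(b*t)/β) := by
      apply Real.exp_lt_exp.2
      rw [← add_div, ← add_div, div_lt_div_iff_of_pos_right hβ]
      nlinarith
    have hlt : (s - t) * (Real.exp (-(b*s)/β + -(a*t)/β)
        - Real.exp (-(a*s)/β + -(b*t)/β)) < 0 :=
      mul_neg_of_pos_of_neg (by linarith) (by linarith)
    exact ⟨hlt.le, fun _ => hlt⟩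

theorem stmt_9 {Y : Type*} [Fintype Y] [Nonempty Y]
    (πref : Y → ℝ) (hpos : ∀ y, 0 < πref y) (hsum : ∑ y, πref y = 1)
    (β : ℝ) (hβ : 0 < β) (n : Y → ℕ) (hn : ∃ y1 y2, n y1 ≠ n y2) :
    StrictAntiOn
      (fun lam : ℝ => ∑ y,
        (πref y * Real.exp (-(lam * n y) / β) /
            (∑ y', πref y' * Real.exp (-(lam * n y') / β))) * n y)
      (Set.Ici (0 : ℝ)) := by
  intro a _ b _ hab
  set w : ℝ → Y → ℝ := fun lam y => πref y * Real.exp (-(lam * n y) / β) with hw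
  have hS : ∀ lam : ℝ, 0 < ∑ y, w lam y := fun lam =>
    Finset.sum_pos (fun y _ => mul_pos (hpos y) (Real.exp_pos _)) Finset.univ_nonempty
  set T : Y → Y → ℝ := fun y z =>
    ((n y : ℝ) - (n z : ℝ)) * (w b y * w a z - w a y * w b z) with hT
  have hTrw : ∀ y z, T y z = πref y * πref z *
      (((n y : ℝ) - (n z : ℝ)) * (Real.exp (-(b*(n y : ℝ))/β) * Real.exp (-(a*(n z : ℝ))/β)
        - Real.exp (-(a*(n y : ℝ))/β) * Real.exp (-(b*(n z : ℝ))/β))) := by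
    intro y z; simp only [hT, hw]; ring
  have hTnonpos : ∀ y z, T y z ≤ 0 := by
    intro y z
    rw [hTrw]
    exact mul_nonpos_of_nonneg_of_nonpos (mul_pos (hpos y) (hpos z)).le
      (expdiff_sign hβ hab _ _).1
  -- the double sum is strictly negative
  have hsumT : ∑ y, ∑ z, T y z < 0 := by
    obtain ⟨y1, y2, hne⟩ := hn
    have hstrict : T y1 y2 < 0 := by
      rw [hTrw]
      exact mul_neg_of_pos_of_neg (mul_pos (hpos y1) (hpos y2))
        ((expdiff_sign hβ hab _ _).2 (by exact_mod_cast hne))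
    have hinner : ∑ z, T y1 z < 0 := by
      calc ∑ z, T y1 z < ∑ _z : Y, (0:ℝ) :=
            Finset.sum_lt_sum (fun z _ => hTnonpos y1 z) ⟨y2, Finset.mem_univ _, hstrict⟩
        _ = 0 := by simp
    calc ∑ y, ∑ z, T y z < ∑ _y : Y, (0:ℝ) :=
          Finset.sum_lt_sum (fun y _ => Finset.sum_nonpos fun z _ => hTnonpos y z)
            ⟨y1, Finset.mem_univ _, hinner⟩
      _ = 0 := by simp
  -- expand the double sum
  have hprod : ∀ (f g : Y → ℝ), (∑ y, f y) * (∑ z, g z) = ∑ y, ∑ z, f y * g z := by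
    intro f g; rw [Finset.sum_mul_sum]
  have hexpand : ∑ y, ∑ z, T y z
      = 2 * ((∑ y, w b y * n y) * (∑ y, w a y) - (∑ y, w a y * n y) * (∑ y, w b y)) := by
    rw [hprod (fun y => w b y * (n y : ℝ)) (fun y => w a y),
        hprod (fun y => w a y * (n y : ℝ)) (fun y => w b y)]
    have h1 : ∑ y, ∑ z, T y z
        = ∑ y, ∑ z, ((w b y * (n y:ℝ) * w a z - w a y * (n y:ℝ) * w b z)
          + (w b z * (n z:ℝ) * w a y - w a z * (n z:ℝ) * w b y)) := by
      refine Finset.sum_congr rfl fun y _ => Finset.sum_congr rfl fun z _ => ?_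
      simp only [hT]; ring
    rw [h1]
    simp only [Finset.sum_add_distrib, Finset.sum_sub_distrib]
    have hc1 : ∑ y, ∑ z, (w b z * (n z:ℝ) * w a y) = ∑ y, ∑ z, (w b y * (n y:ℝ) * w a z) :=
      Finset.sum_comm
    have hc2 : ∑ y, ∑ z, (w a z * (n z:ℝ) * w b y) = ∑ y, ∑ z, (w a y * (n y:ℝ) * w b z) :=
      Finset.sum_comm
    rw [hc1, hc2]
    have e1 : ∑ y, ∑ z, (w b y * (n y:ℝ) * w a z)
        = ∑ y, ∑ z, (fun y => w b y * (n y:ℝ)) y * (fun y => w a y) z := rfl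
    have e2 : ∑ y, ∑ z, (w a y * (n y:ℝ) * w b z)
        = ∑ y, ∑ z, (fun y => w a y * (n y:ℝ)) y * (fun y => w b y) z := rfl
    ring
  have hkey : (∑ y, w b y * n y) * (∑ y, w a y) < (∑ y, w a y * n y) * (∑ y, w b y) := by
    nlinarith [hsumT, hexpand]
  have final : (∑ y, w b y * n y) / (∑ y', w b y') < (∑ y, w a y * n y) / (∑ y', w a y') :=
    (div_lt_div_iff₀ (hS b) (hS a)).2 hkey
  have hform : ∀ lam : ℝ, ∑ y, (w lam y / (∑ y', w lam y')) * (n y:ℝ)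
      = (∑ y, w lam y * n y) / (∑ y', w lam y') := by
    intro lam
    rw [Finset.sum_div]
    exact Finset.sum_congr rfl fun y _ => div_mul_eq_mul_div _ _ _
  show (∑ y, (w b y / ∑ y', w b y') * (n y:ℝ)) < ∑ y, (w a y / ∑ y', w a y') * (n y:ℝ)
  rw [hform, hform]
  exact final
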